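/- Let L be a Lie superalgebra over k, z ∈ Z(L) with |z| = 0, and α ∈ k. Then the map φ(x⊗y) = α[x,y]⊗z + (−1)^{|x||y|} y⊗x (defined on homogeneous elements and extended linearly) satisfies the braid equation. -/

import Mathlib

open TensorProduct

noncomputable section

def tw (k V : Type*) [Field k] [AddCommGroup V] [Module k V] :
    V ⊗[k] V →ₗ[k] V ⊗[k] V := (TensorProduct.comm k V V).toLinearMap

def R12 {k V : Type*} [Field k] [AddCommGroup V] [Module k V]
    (R : V ⊗[k] V →ₗ[k] V ⊗[k] V) :
    V ⊗[k] (V ⊗[k] V) →ₗ[k] V ⊗[k] (V ⊗[k] V) :=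
  (TensorProduct.assoc k V V V).toLinearMap ∘ₗ TensorProduct.map R LinearMap.id ∘ₗ
    (TensorProduct.assoc k V V V).symm.toLinearMap

def R23 {k V : Type*} [Field k] [AddCommGroup V] [Module k V]
    (R : V ⊗[k] V →ₗ[k] V ⊗[k] V) :
    V ⊗[k] (V ⊗[k] V) →ₗ[k] V ⊗[k] (V ⊗[k] V) :=
  TensorProduct.map LinearMap.id R

def R13 {k V : Type*} [Field k] [AddCommGroup V] [Module k V]
    (R : V ⊗[k] V →ₗ[k] V ⊗[k] V) :
    V ⊗[k] (V ⊗[k] V) →ₗ[k] V ⊗[k] (V ⊗[k] V) :=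
  TensorProduct.map LinearMap.id (tw k V) ∘ₗ R12 R ∘ₗ TensorProduct.map LinearMap.id (tw k V)

set_option maxHeartbeats 1000000 in
theorem lie_superalgebra_braid {k L : Type*} [Field k] [AddCommGroup L] [Module k L]
    (G : ZMod 2 → Submodule k L) (hG : DirectSum.IsInternal G)
    (b : L →ₗ[k] L →ₗ[k] L)
    (hgrade : ∀ i j : ZMod 2, ∀ x ∈ G i, ∀ y ∈ G j, b x y ∈ G (i + j))
    (hanti : ∀ i j : ZMod 2, ∀ x ∈ G i, ∀ y ∈ G j,
      b x y = -(((-1 : k) ^ (i.val * j.val)) • b y x))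
    (hjacobi : ∀ i j l : ZMod 2, ∀ x ∈ G i, ∀ y ∈ G j, ∀ w ∈ G l,
      ((-1 : k) ^ (l.val * i.val)) • b x (b y w) +
        ((-1 : k) ^ (i.val * j.val)) • b y (b w x) +
        ((-1 : k) ^ (j.val * l.val)) • b w (b x y) = 0)
    (z : L) (hz0 : z ∈ G 0) (hz : ∀ x : L, b z x = 0)
    (α : k)
    (φ : L ⊗[k] L →ₗ[k] L ⊗[k] L)
    (hφ : ∀ i j : ZMod 2, ∀ x ∈ G i, ∀ y ∈ G j,
      φ (x ⊗ₜ y) = α • (b x y) ⊗ₜ z + ((-1 : k) ^ (i.val * j.val)) • y ⊗ₜ x) :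
    R12 φ ∘ₗ R23 φ ∘ₗ R12 φ = R23 φ ∘ₗ R12 φ ∘ₗ R23 φ := by
  -- brackets with z vanish on both sides
  have hbz : ∀ m : ZMod 2, ∀ v ∈ G m, b v z = 0 := by
    intro m v hv
    rw [hanti m 0 v hv z hz0, hz v]
    simp
  have hφzl : ∀ m : ZMod 2, ∀ v ∈ G m, φ (z ⊗ₜ v) = v ⊗ₜ z := by
    intro m v hv
    rw [hφ 0 m z hz0 v hv, hz v]
    simp
  have hφzr : ∀ m : ZMod 2, ∀ v ∈ G m, φ (v ⊗ₜ z) = z ⊗ₜ v := by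
    intro m v hv
    rw [hφ m 0 v hv z hz0, hbz m v hv]
    simp
  -- sign lemmas
  have two0 : (2 : ZMod 2) = 0 := by decide
  have sadd1 : ∀ m n p : ZMod 2,
      ((-1 : k) ^ ((m + n).val * p.val)) = (-1) ^ (m.val * p.val) * (-1) ^ (n.val * p.val) := by
    intro m n p
    rw [ZMod.val_add]
    fin_cases m <;> fin_cases n <;> fin_cases p <;>
      norm_num [ZMod.val, show ((2 : ZMod 2).val = 0) from rfl, show ((1 : ZMod 2).val = 1) from rfl,
        show ((0 : ZMod 2).val = 0) from rfl]
  have sadd2 : ∀ m n p : ZMod 2,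
      ((-1 : k) ^ (m.val * (n + p).val)) = (-1) ^ (m.val * n.val) * (-1) ^ (m.val * p.val) := by
    intro m n p
    rw [ZMod.val_add]
    fin_cases m <;> fin_cases n <;> fin_cases p <;>
      norm_num [ZMod.val, show ((2 : ZMod 2).val = 0) from rfl, show ((1 : ZMod 2).val = 1) from rfl,
        show ((0 : ZMod 2).val = 0) from rfl]
  have sq : ∀ m n : ZMod 2, ((-1 : k) ^ (m.val * n.val)) * ((-1 : k) ^ (m.val * n.val)) = 1 := by
    intro m n
    rw [← pow_add]
    exact Even.neg_one_pow ⟨_, rfl⟩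
  -- evaluation helpers
  have hR12t : ∀ u v t : L,
      R12 φ (u ⊗ₜ (v ⊗ₜ t)) = (TensorProduct.assoc k L L L) (φ (u ⊗ₜ v) ⊗ₜ t) := by
    intro u v t
    simp [R12]
  have hR23t : ∀ (u : L) (s : L ⊗[k] L), R23 φ (u ⊗ₜ s) = u ⊗ₜ (φ s) := by
    intro u s
    simp [R23]
  have core : ∀ (i j l : ZMod 2) (x y w : L), x ∈ G i → y ∈ G j → w ∈ G l →
      (R12 φ ∘ₗ R23 φ ∘ₗ R12 φ) (x ⊗ₜ (y ⊗ₜ w)) =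
        (R23 φ ∘ₗ R12 φ ∘ₗ R23 φ) (x ⊗ₜ (y ⊗ₜ w)) := by
    intro i j l x y w hx hy hw
    have e_xy := hφ i j x hx y hy
    have e_yw := hφ j l y hy w hw
    have e_xw := hφ i l x hx w hw
    have e_zz := hφzl 0 z hz0
    have e_xz := hφzr i x hx
    have e_zw := hφzl l w hw
    have e_zy := hφzl j y hy
    have e_bxy_w : φ ((b x y) ⊗ₜ w) = α • (b (b x y) w) ⊗ₜ z +
        (((-1 : k) ^ (i.val * l.val)) * ((-1 : k) ^ (j.val * l.val))) • w ⊗ₜ (b x y) := by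
      rw [hφ (i + j) l (b x y) (hgrade i j x hx y hy) w hw, sadd1]
    have e_y_bxw : φ (y ⊗ₜ (b x w)) = α • (b y (b x w)) ⊗ₜ z +
        (((-1 : k) ^ (i.val * j.val)) * ((-1 : k) ^ (j.val * l.val))) • (b x w) ⊗ₜ y := by
      rw [hφ j (i + l) y hy (b x w) (hgrade i l x hx w hw), sadd2,
        Nat.mul_comm j.val i.val, Nat.mul_comm j.val l.val]
    have e_x_byw : φ (x ⊗ₜ (b y w)) = α • (b x (b y w)) ⊗ₜ z +
        (((-1 : k) ^ (i.val * j.val)) * ((-1 : k) ^ (i.val * l.val))) • (b y w) ⊗ₜ x := by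
      rw [hφ i (j + l) x hx (b y w) (hgrade j l y hy w hw), sadd2]
    -- the Jacobi identity in the form we need
    have jac : b x (b y w) =
        ((-1 : k) ^ (i.val * j.val)) • b y (b x w) + b (b x y) w := by
      have J := hjacobi i j l x hx y hy w hw
      rw [hanti l i w hw x hx, hanti l (i + j) w hw (b x y) (hgrade i j x hx y hy),
        sadd2, Nat.mul_comm l.val i.val, Nat.mul_comm l.val j.val] at J
      simp only [map_neg, map_smul, smul_neg, smul_smul] at J
      rcases mul_self_eq_one_iff.mp (sq i j) with h1 | h1 <;>
        rcases mul_self_eq_one_iff.mp (sq i l) with h2 | h2 <;>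
          rcases mul_self_eq_one_iff.mp (sq j l) with h3 | h3 <;>
            rw [h1, h2, h3] at J <;> rw [h1] <;>
              first
              | linear_combination (norm := module) J
              | linear_combination (norm := module) -J
    -- step-by-step computation of both sides
    have L1 : R12 φ (x ⊗ₜ (y ⊗ₜ w)) = α • ((b x y) ⊗ₜ (z ⊗ₜ w)) +
        ((-1 : k) ^ (i.val * j.val)) • (y ⊗ₜ (x ⊗ₜ w)) := by
      rw [hR12t, e_xy]
      simp only [add_tmul, ← smul_tmul', map_add, map_smul, TensorProduct.assoc_tmul]
    have L2 : R23 φ (α • ((b x y) ⊗ₜ (z ⊗ₜ w)) +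
          ((-1 : k) ^ (i.val * j.val)) • (y ⊗ₜ (x ⊗ₜ w))) =
        α • ((b x y) ⊗ₜ (w ⊗ₜ z)) +
          (((-1 : k) ^ (i.val * j.val)) * α) • (y ⊗ₜ ((b x w) ⊗ₜ z)) +
          (((-1 : k) ^ (i.val * j.val)) * ((-1 : k) ^ (i.val * l.val))) • (y ⊗ₜ (w ⊗ₜ x)) := by
      simp only [map_add, map_smul, hR23t, e_zw, e_xw, tmul_add, tmul_smul, smul_add, smul_smul]
      module
    have L3 : R12 φ (α • ((b x y) ⊗ₜ (w ⊗ₜ z)) +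
          (((-1 : k) ^ (i.val * j.val)) * α) • (y ⊗ₜ ((b x w) ⊗ₜ z)) +
          (((-1 : k) ^ (i.val * j.val)) * ((-1 : k) ^ (i.val * l.val))) • (y ⊗ₜ (w ⊗ₜ x))) =
        (α * α) • ((b (b x y) w) ⊗ₜ (z ⊗ₜ z)) +
          (α * (((-1 : k) ^ (i.val * l.val)) * ((-1 : k) ^ (j.val * l.val)))) •
            (w ⊗ₜ ((b x y) ⊗ₜ z)) +
          (((-1 : k) ^ (i.val * j.val)) * (α * α)) • ((b y (b x w)) ⊗ₜ (z ⊗ₜ z)) +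
          (((-1 : k) ^ (i.val * j.val)) * α *
            (((-1 : k) ^ (i.val * j.val)) * ((-1 : k) ^ (j.val * l.val)))) •
            ((b x w) ⊗ₜ (y ⊗ₜ z)) +
          (((-1 : k) ^ (i.val * j.val)) * ((-1 : k) ^ (i.val * l.val)) * α) •
            ((b y w) ⊗ₜ (z ⊗ₜ x)) +
          (((-1 : k) ^ (i.val * j.val)) * ((-1 : k) ^ (i.val * l.val)) *
            ((-1 : k) ^ (j.val * l.val))) • (w ⊗ₜ (y ⊗ₜ x)) := by
      simp only [map_add, map_smul, hR12t, e_bxy_w, e_y_bxw, e_yw, add_tmul, ← smul_tmul',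
        TensorProduct.assoc_tmul, smul_add, smul_smul]
      module
    have Rh1 : R23 φ (x ⊗ₜ (y ⊗ₜ w)) = α • (x ⊗ₜ ((b y w) ⊗ₜ z)) +
        ((-1 : k) ^ (j.val * l.val)) • (x ⊗ₜ (w ⊗ₜ y)) := by
      rw [hR23t, e_yw]
      simp only [tmul_add, tmul_smul]
    have Rh2 : R12 φ (α • (x ⊗ₜ ((b y w) ⊗ₜ z)) +
          ((-1 : k) ^ (j.val * l.val)) • (x ⊗ₜ (w ⊗ₜ y))) =
        (α * α) • ((b x (b y w)) ⊗ₜ (z ⊗ₜ z)) +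
          (α * (((-1 : k) ^ (i.val * j.val)) * ((-1 : k) ^ (i.val * l.val)))) •
            ((b y w) ⊗ₜ (x ⊗ₜ z)) +
          (((-1 : k) ^ (j.val * l.val)) * α) • ((b x w) ⊗ₜ (z ⊗ₜ y)) +
          (((-1 : k) ^ (j.val * l.val)) * ((-1 : k) ^ (i.val * l.val))) • (w ⊗ₜ (x ⊗ₜ y)) := by
      simp only [map_add, map_smul, hR12t, e_x_byw, e_xw, add_tmul, ← smul_tmul',
        TensorProduct.assoc_tmul, smul_add, smul_smul]
      module
    have Rh3 : R23 φ ((α * α) • ((b x (b y w)) ⊗ₜ (z ⊗ₜ z)) +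
          (α * (((-1 : k) ^ (i.val * j.val)) * ((-1 : k) ^ (i.val * l.val)))) •
            ((b y w) ⊗ₜ (x ⊗ₜ z)) +
          (((-1 : k) ^ (j.val * l.val)) * α) • ((b x w) ⊗ₜ (z ⊗ₜ y)) +
          (((-1 : k) ^ (j.val * l.val)) * ((-1 : k) ^ (i.val * l.val))) • (w ⊗ₜ (x ⊗ₜ y))) =
        (α * α) • ((b x (b y w)) ⊗ₜ (z ⊗ₜ z)) +
          (α * (((-1 : k) ^ (i.val * j.val)) * ((-1 : k) ^ (i.val * l.val)))) •
            ((b y w) ⊗ₜ (z ⊗ₜ x)) +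
          (((-1 : k) ^ (j.val * l.val)) * α) • ((b x w) ⊗ₜ (y ⊗ₜ z)) +
          (((-1 : k) ^ (j.val * l.val)) * ((-1 : k) ^ (i.val * l.val)) * α) •
            (w ⊗ₜ ((b x y) ⊗ₜ z)) +
          (((-1 : k) ^ (j.val * l.val)) * ((-1 : k) ^ (i.val * l.val)) *
            ((-1 : k) ^ (i.val * j.val))) • (w ⊗ₜ (y ⊗ₜ x)) := by
      simp only [map_add, map_smul, hR23t, e_zz, e_xz, e_zy, e_xy, tmul_add, tmul_smul,
        smul_add, smul_smul]
      module
    simp only [LinearMap.coe_comp, Function.comp_apply]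
    rw [L1, L2, L3, Rh1, Rh2, Rh3, jac]
    simp only [add_tmul, ← smul_tmul', smul_add, smul_smul]
    rcases mul_self_eq_one_iff.mp (sq i j) with h1 | h1 <;> rw [h1] <;> module
  -- now extend by linearity
  have hS : Submodule.span k (⋃ i, (G i : Set L)) = ⊤ := by
    rw [← Submodule.iSup_eq_span]
    exact hG.submodule_iSup_eq_top
  have hmem : ∀ v : L, v ∈ Submodule.span k (⋃ i, (G i : Set L)) := by
    intro v; rw [hS]; exact Submodule.mem_top
  have key : ∀ x y w : L,
      (R12 φ ∘ₗ R23 φ ∘ₗ R12 φ) (x ⊗ₜ (y ⊗ₜ w)) =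
        (R23 φ ∘ₗ R12 φ ∘ₗ R23 φ) (x ⊗ₜ (y ⊗ₜ w)) := by
    intro x y w
    induction hmem x using Submodule.span_induction with
    | mem a ha =>
      obtain ⟨i, hi⟩ := Set.mem_iUnion.mp ha
      induction hmem y using Submodule.span_induction with
      | mem c hc =>
        obtain ⟨j, hj⟩ := Set.mem_iUnion.mp hc
        induction hmem w using Submodule.span_induction with
        | mem d hd =>
          obtain ⟨l, hl⟩ := Set.mem_iUnion.mp hd
          exact core i j l a c d hi hj hl
        | zero => simp
        | add d d' _ _ h1 h2 => simp only [tmul_add, map_add, h1, h2]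
        | smul r d _ h1 => simp only [tmul_smul, map_smul, h1]
      | zero => simp
      | add c c' _ _ h1 h2 => simp only [tmul_add, add_tmul, map_add, h1, h2]
      | smul r c _ h1 =>
        simp only [← smul_tmul', tmul_smul, map_smul, h1]
    | zero => simp
    | add a a' _ _ h1 h2 => simp only [add_tmul, map_add, h1, h2]
    | smul r a _ h1 => simp only [← smul_tmul', map_smul, h1]
  apply TensorProduct.ext'
  intro x t
  induction t using TensorProduct.induction_on with
  | zero => simp
  | tmul y w => exact key x y w
  | add t1 t2 h1 h2 => simp only [tmul_add, map_add, h1, h2]
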